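/- (Lemma, expected interference bound.) Fix x ≥ 0 at which F is differentiable, and suppose F satisfies Assumption 2 with constant β > 0. Let ρ be the spectral radius of AᵀA. Perform one Shotgun iteration with P parallel updates at x, producing the random collective update Δx. Then E_{P_t}[ F(x + Δx) − F(x) ] ≤ P · E_j[ δx_j (∇F(x))_j + (β/2)(δx_j)² ] + (β/2) P (P−1) (ρ/m) · E_j[ (δx_j)² ], where E_{P_t} is over the random choice of the P indices, E_j is over a single index j chosen uniformly from {1,…,m}, and δx_j = max{ −x_j , −(∇F(x))_j / β }. -/

import Mathlib

open Matrix Finset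

/-- `(∇F(x))_j`, the `j`-th coordinate of the gradient of `F` at `x`. -/
noncomputable def grad {m : ℕ} (F : (Fin m → ℝ) → ℝ) (x : Fin m → ℝ) (j : Fin m) : ℝ :=
  fderiv ℝ F x (Pi.single j 1)

/-- Assumption 2 with constant `β > 0`: for every feasible `x` and `Δx`,
`F(x + Δx) ≤ F(x) + Δxᵀ ∇F(x) + (β/2) Δxᵀ AᵀA Δx`. -/
def Assumption2 {n m : ℕ} (A : Matrix (Fin n) (Fin m) ℝ) (β : ℝ)
    (F : (Fin m → ℝ) → ℝ) : Prop :=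
  ∀ x Δx : Fin m → ℝ, 0 ≤ x → 0 ≤ x + Δx →
    F (x + Δx) ≤ F x + (∑ j, Δx j * grad F x j) + β / 2 * (Δx ⬝ᵥ (Aᵀ * A).mulVec Δx)

/-- The spectral radius of a real square matrix: the supremum of the absolute values of its
eigenvalues. -/
noncomputable def specRad {ι : Type} [Fintype ι] [DecidableEq ι]
    (M : Matrix ι ι ℝ) : ℝ :=
  sSup {r : ℝ | ∃ μ : ℝ, Module.End.HasEigenvalue (Matrix.toLin' M) μ ∧ r = |μ|}


section helpers
lemma sum_comp_eval {α κ : Type*} [Fintype α] [DecidableEq α] [Fintype κ] (k : α) (f : κ → ℝ) :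
    ∑ σ : α → κ, f (σ k) =
      (Fintype.card ({j : α // j ≠ k} → κ) : ℝ) * ∑ a, f a := by
  have := Fintype.sum_equiv (Equiv.funSplitAt k κ) (fun σ => f (σ k)) (fun p => f p.1)
    (fun σ => rfl)
  rw [this, Fintype.sum_prod_type_right]
  simp [Finset.sum_const, mul_comm, Finset.mul_sum]

lemma card_split {α κ : Type*} [Fintype α] [DecidableEq α] [Fintype κ] (k : α) :
    Fintype.card (α → κ) = Fintype.card κ * Fintype.card ({j : α // j ≠ k} → κ) := by
  rw [Fintype.card_congr (Equiv.funSplitAt k κ), Fintype.card_prod]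

lemma sum_comp_eval2 {α κ : Type*} [Fintype α] [DecidableEq α] [Fintype κ] (k l : α)
    (h : l ≠ k) (f : κ → κ → ℝ) :
    ∑ σ : α → κ, f (σ k) (σ l) =
      (Fintype.card ({j' : {j : α // j ≠ k} // j' ≠ ⟨l, h⟩} → κ) : ℝ) * ∑ a, ∑ b, f a b := by
  have := Fintype.sum_equiv (Equiv.funSplitAt k κ) (fun σ => f (σ k) (σ l))
    (fun p => f p.1 (p.2 ⟨l, h⟩)) (fun σ => rfl)
  rw [this, Fintype.sum_prod_type]
  rw [Finset.mul_sum]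
  exact Finset.sum_congr rfl fun a _ => sum_comp_eval (⟨l, h⟩ : {j : α // j ≠ k}) (fun b => f a b)
end helpers

lemma quad_le_specRad {n m : ℕ} (hm : 0 < m) (A : Matrix (Fin n) (Fin m) ℝ) (v : Fin m → ℝ) :
    v ⬝ᵥ (Aᵀ * A).mulVec v ≤ specRad (Aᵀ * A) * ∑ j, v j ^ 2 := by
  by_cases hv : v = 0
  · simp [hv]
  set M := Aᵀ * A with hMdef
  have hHerm : M.IsHermitian := by
    have := Matrix.isHermitian_conjTranspose_mul_self A
    simpa [Matrix.conjTranspose_eq_transpose_of_trivial] using this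
  have hSym : (Matrix.toEuclideanLin M).IsSymmetric :=
    Matrix.isHermitian_iff_isSymmetric.mp hHerm
  haveI : Nonempty (Fin m) := ⟨⟨0, hm⟩⟩
  haveI : Nontrivial (EuclideanSpace ℝ (Fin m)) := by
    refine ⟨(WithLp.equiv 2 _).symm 0, (WithLp.equiv 2 _).symm 1, ?_⟩
    simp only [ne_eq, EmbeddingLike.apply_eq_iff_eq]
    exact fun h => one_ne_zero ((congrFun h.symm) ⟨0, hm⟩)
  set T := Matrix.toEuclideanLin M with hT
  set μ : ℝ := ⨆ x : {x : EuclideanSpace ℝ (Fin m) // x ≠ 0},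
      RCLike.re (inner ℝ (T x) (x : EuclideanSpace ℝ (Fin m)) : ℝ) / ‖(x : EuclideanSpace ℝ (Fin m))‖ ^ 2
    with hμdef
  have hev : Module.End.HasEigenvalue T μ := by
    rw [hμdef]
    simpa using hSym.hasEigenvalue_iSup_of_finiteDimensional
  -- transfer eigenvalue to toLin'
  obtain ⟨w, hw⟩ := hev.exists_hasEigenvector
  have hev' : Module.End.HasEigenvalue (Matrix.toLin' M) μ := by
    apply Module.End.hasEigenvalue_of_hasEigenvector
      (x := (WithLp.equiv 2 (Fin m → ℝ)) w)
    refine ⟨Module.End.mem_eigenspace_iff.mpr ?_, ?_⟩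
    · have h1 : T w = μ • w := hw.apply_eq_smul
      have := congrArg (WithLp.equiv 2 (Fin m → ℝ)) h1
      simpa [hT, Matrix.ofLp_toEuclideanLin_apply] using this
    · simpa using hw.2
  -- μ ≤ specRad
  have hfin : {r : ℝ | ∃ μ' : ℝ, Module.End.HasEigenvalue (Matrix.toLin' M) μ' ∧ r = |μ'|}.Finite := by
    apply Set.Finite.subset ((Module.End.finite_hasEigenvalue (Matrix.toLin' M)).image abs)
    rintro r ⟨μ', h1, rfl⟩
    exact ⟨μ', h1, rfl⟩
  have hμρ : μ ≤ specRad M :=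
    le_trans (le_abs_self μ) (le_csSup hfin.bddAbove ⟨μ, hev', rfl⟩)
  -- Rayleigh quotient bounded, so for any nonzero u, quotient ≤ μ
  have hbdd : BddAbove (Set.range fun x : {x : EuclideanSpace ℝ (Fin m) // x ≠ 0} =>
      RCLike.re (inner ℝ (T x) (x : EuclideanSpace ℝ (Fin m)) : ℝ) / ‖(x : EuclideanSpace ℝ (Fin m))‖ ^ 2) := by
    set T' := LinearMap.toContinuousLinearMap T with hT'
    refine ⟨‖T'‖, ?_⟩
    rintro r ⟨x, rfl⟩
    have hx : (0:ℝ) < ‖(x : EuclideanSpace ℝ (Fin m))‖ ^ 2 := by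
      exact pow_pos (norm_pos_iff.mpr x.2) 2
    rw [div_le_iff₀ hx]
    calc RCLike.re (inner ℝ (T x) (x : EuclideanSpace ℝ (Fin m)) : ℝ)
        = (inner ℝ (T x) (x : EuclideanSpace ℝ (Fin m)) : ℝ) := rfl
      _ ≤ ‖T (x : EuclideanSpace ℝ (Fin m))‖ * ‖(x : EuclideanSpace ℝ (Fin m))‖ :=
          real_inner_le_norm _ _
      _ ≤ (‖T'‖ * ‖(x : EuclideanSpace ℝ (Fin m))‖) * ‖(x : EuclideanSpace ℝ (Fin m))‖ := by
          have := T'.le_opNorm (x : EuclideanSpace ℝ (Fin m))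
          have hx0 : (0:ℝ) ≤ ‖(x : EuclideanSpace ℝ (Fin m))‖ := norm_nonneg _
          exact mul_le_mul_of_nonneg_right this hx0
      _ = ‖T'‖ * ‖(x : EuclideanSpace ℝ (Fin m))‖ ^ 2 := by ring
  -- apply to v
  set v' : EuclideanSpace ℝ (Fin m) := (WithLp.equiv 2 (Fin m → ℝ)).symm v with hv'
  have hv'ne : v' ≠ 0 := by
    simpa [hv'] using hv
  have hray : RCLike.re (inner ℝ (T v') (v' : EuclideanSpace ℝ (Fin m)) : ℝ) / ‖v'‖ ^ 2 ≤ μ :=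
    le_ciSup hbdd (⟨v', hv'ne⟩ : {x : EuclideanSpace ℝ (Fin m) // x ≠ 0})
  have hnorm : ‖v'‖ ^ 2 = ∑ j, v j ^ 2 := by
    rw [← real_inner_self_eq_norm_sq]
    rw [hv', WithLp.equiv_symm_apply, EuclideanSpace.inner_toLp_toLp]
    simp [dotProduct, pow_two]
  have hpos : (0:ℝ) < ‖v'‖ ^ 2 := pow_pos (norm_pos_iff.mpr hv'ne) 2
  have hinner : RCLike.re (inner ℝ (T v') (v' : EuclideanSpace ℝ (Fin m)) : ℝ)
      = v ⬝ᵥ M.mulVec v := by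
    have h1 : T v' = (WithLp.equiv 2 (Fin m → ℝ)).symm (M.mulVec v) := by
      rw [hv']
      rfl
    rw [h1, hv', WithLp.equiv_symm_apply, EuclideanSpace.inner_toLp_toLp]
    simp [dotProduct_comm]
  rw [div_le_iff₀ hpos] at hray
  rw [hinner] at hray
  calc v ⬝ᵥ M.mulVec v ≤ μ * ‖v'‖ ^ 2 := hray
    _ ≤ specRad M * ‖v'‖ ^ 2 := mul_le_mul_of_nonneg_right hμρ (le_of_lt hpos)
    _ = specRad M * ∑ j, v j ^ 2 := by rw [hnorm]

/-- Lemma (expected interference bound): one Shotgun iteration with `P` parallel updates,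
the `P` indices drawn independently and uniformly from `{1,…,m}`, satisfies
`E_{P_t}[F(x+Δx) - F(x)] ≤ P·E_j[δx_j (∇F(x))_j + (β/2)(δx_j)²]
  + (β/2) P (P-1) (ρ/m) · E_j[(δx_j)²]`. -/
theorem shotgun_expected_interference_bound {n m P : ℕ} (hm : 0 < m)
    (A : Matrix (Fin n) (Fin m) ℝ) (hA : ∀ j : Fin m, ∑ i, (A i j) ^ 2 = 1)
    (β : ℝ) (hβ : 0 < β) (F : (Fin m → ℝ) → ℝ)
    (hconv : ConvexOn ℝ {z : Fin m → ℝ | 0 ≤ z} F)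
    (hF : Assumption2 A β F)
    (x : Fin m → ℝ) (hx : 0 ≤ x) (hdiff : DifferentiableAt ℝ F x)
    (ρ : ℝ) (hρ : ρ = specRad (Aᵀ * A))
    (δ : Fin m → ℝ) (hδ : ∀ j, δ j = max (-(x j)) (-(grad F x j) / β))
    (Δ : (Fin P → Fin m) → (Fin m → ℝ))
    (hΔ : ∀ σ : Fin P → Fin m, Δ σ = ∑ j : Fin P, Pi.single (σ j) (δ (σ j)))
    (hfeas : ∀ σ : Fin P → Fin m, 0 ≤ x + Δ σ) :
    (1 / (m : ℝ) ^ P) * ∑ σ : Fin P → Fin m, (F (x + Δ σ) - F x) ≤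
      (P : ℝ) * ((1 / (m : ℝ)) * ∑ j, (δ j * grad F x j + β / 2 * (δ j) ^ 2)) +
        β / 2 * (P : ℝ) * ((P : ℝ) - 1) * (ρ / m) *
          ((1 / (m : ℝ)) * ∑ j, (δ j) ^ 2) := by
  have hm' : (0:ℝ) < m := by exact_mod_cast hm
  set M := Aᵀ * A with hMdef
  set g : Fin m → ℝ := grad F x with hg
  have hMsymm : ∀ a b, M a b = M b a := by
    intro a b
    rw [hMdef, Matrix.mul_apply, Matrix.mul_apply]
    exact Finset.sum_congr rfl fun i _ => by simp [Matrix.transpose_apply, mul_comm]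
  have hMdiag : ∀ a, M a a = 1 := by
    intro a
    rw [hMdef, Matrix.mul_apply]
    simpa [Matrix.transpose_apply, pow_two] using hA a
  -- per-sigma bound
  have hσ : ∀ σ, F (x + Δ σ) - F x ≤
      (∑ j, Δ σ j * g j) + β / 2 * (Δ σ ⬝ᵥ M.mulVec (Δ σ)) := by
    intro σ
    have := hF x (Δ σ) hx (hfeas σ)
    rw [← hMdef] at this
    linarith
  -- linear expansion
  have hL : ∀ σ, (∑ j, Δ σ j * g j) = ∑ k : Fin P, δ (σ k) * g (σ k) := by
    intro σ
    rw [hΔ σ]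
    simp only [Finset.sum_apply, Finset.sum_mul, Pi.single_apply, ite_mul, zero_mul]
    rw [Finset.sum_comm]
    simp
  -- quadratic expansion
  have hQ : ∀ σ, Δ σ ⬝ᵥ M.mulVec (Δ σ) =
      ∑ k : Fin P, ∑ l : Fin P, δ (σ k) * M (σ k) (σ l) * δ (σ l) := by
    intro σ
    rw [hΔ σ]
    have h1 : M *ᵥ (∑ l : Fin P, Pi.single (σ l) (δ (σ l))) =
        ∑ l : Fin P, M *ᵥ Pi.single (σ l) (δ (σ l)) := by
      show M.mulVecLin _ = _
      rw [map_sum]; rfl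
    rw [h1]
    simp only [dotProduct, Finset.sum_apply, Finset.sum_mul, Finset.mul_sum]
    rw [Finset.sum_comm]
    refine Finset.sum_congr rfl fun k _ => ?_
    rw [Finset.sum_comm]
    refine Finset.sum_congr rfl fun l _ => ?_
    have h2 : (∑ i, (Pi.single (σ l) (δ (σ l)) : Fin m → ℝ) i * (M *ᵥ Pi.single (σ k) (δ (σ k))) i)
        = (Pi.single (σ l) (δ (σ l)) : Fin m → ℝ) ⬝ᵥ (M *ᵥ Pi.single (σ k) (δ (σ k))) := rfl
    rw [h2, single_dotProduct]
    simp only [Matrix.mulVec_single, Pi.smul_apply, Matrix.col_apply, op_smul_eq_mul]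
    rw [hMsymm (σ l) (σ k)]
    ring
  -- counting lemmas specialized
  have hcount1 : ∀ (f : Fin m → ℝ) (k : Fin P),
      ∑ σ : Fin P → Fin m, f (σ k) = ((m:ℝ)^P / m) * ∑ a, f a := by
    intro f k
    rw [sum_comp_eval]
    congr 1
    have h := card_split (κ := Fin m) k
    rw [Fintype.card_fun, Fintype.card_fin, Fintype.card_fin] at h
    have h' : (m:ℝ)^P = m * (Fintype.card ({j : Fin P // j ≠ k} → Fin m) : ℝ) := by
      exact_mod_cast h
    rw [eq_div_iff (ne_of_gt hm')]
    linarith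
  have hcount2 : ∀ (f : Fin m → Fin m → ℝ) (k l : Fin P) (h : l ≠ k),
      ∑ σ : Fin P → Fin m, f (σ k) (σ l) = ((m:ℝ)^P / m^2) * ∑ a, ∑ b, f a b := by
    intro f k l h
    rw [sum_comp_eval2 k l h]
    congr 1
    have h1 := card_split (κ := Fin m) k
    have h2 := card_split (κ := Fin m) (⟨l, h⟩ : {j : Fin P // j ≠ k})
    rw [Fintype.card_fun, Fintype.card_fin, Fintype.card_fin] at h1
    rw [Fintype.card_fin] at h2
    have h1' : (m:ℝ)^P = m * (Fintype.card ({j : Fin P // j ≠ k} → Fin m) : ℝ) := by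
      exact_mod_cast h1
    have h2' : (Fintype.card ({j : Fin P // j ≠ k} → Fin m) : ℝ)
        = m * (Fintype.card ({j' : {j : Fin P // j ≠ k} // j' ≠ ⟨l, h⟩} → Fin m) : ℝ) := by
      exact_mod_cast h2
    have hm2 : ((m:ℝ)^2) ≠ 0 := by positivity
    rw [eq_div_iff hm2, h1', h2']
    ring
  -- abbreviations
  set S1 : ℝ := ∑ j, δ j * g j with hS1
  set S2 : ℝ := ∑ j, δ j ^ 2 with hS2
  set Qd : ℝ := ∑ a, ∑ b, δ a * M a b * δ b with hQd
  -- the spectral bound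
  have hQdρ : Qd ≤ ρ * S2 := by
    have h1 : Qd = δ ⬝ᵥ M.mulVec δ := by
      rw [hQd]
      simp only [dotProduct, Matrix.mulVec, Finset.mul_sum]
      exact Finset.sum_congr rfl fun a _ => Finset.sum_congr rfl fun b _ => by ring
    rw [h1, hρ, hS2]
    exact quad_le_specRad hm A δ
  -- sum of linear parts
  have hsumL : ∑ σ : Fin P → Fin m, ∑ k : Fin P, δ (σ k) * g (σ k)
      = (P:ℝ) * ((m:ℝ)^P / m) * S1 := by
    rw [Finset.sum_comm]
    have : ∀ k : Fin P, ∑ σ : Fin P → Fin m, δ (σ k) * g (σ k) = ((m:ℝ)^P / m) * S1 :=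
      fun k => hcount1 (fun a => δ a * g a) k
    rw [Finset.sum_congr rfl fun k _ => this k, Finset.sum_const, Finset.card_univ,
      Fintype.card_fin, nsmul_eq_mul]
    ring
  -- sum of quadratic parts
  have hsumQ : ∑ σ : Fin P → Fin m, ∑ k : Fin P, ∑ l : Fin P,
        δ (σ k) * M (σ k) (σ l) * δ (σ l)
      = (P:ℝ) * ((m:ℝ)^P / m) * S2 + (P:ℝ) * ((P:ℝ) - 1) * ((m:ℝ)^P / m^2) * Qd := by
    rw [Finset.sum_comm]
    have hk : ∀ k : Fin P, (∑ σ : Fin P → Fin m, ∑ l : Fin P,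
          δ (σ k) * M (σ k) (σ l) * δ (σ l))
        = ((m:ℝ)^P / m) * S2 + ((P:ℝ) - 1) * ((m:ℝ)^P / m^2) * Qd := by
      intro k
      rw [Finset.sum_comm]
      rw [← Finset.sum_erase_add Finset.univ _ (Finset.mem_univ k)]
      have hdiag : ∑ σ : Fin P → Fin m, δ (σ k) * M (σ k) (σ k) * δ (σ k)
          = ((m:ℝ)^P / m) * S2 := by
        rw [hcount1 (fun a => δ a * M a a * δ a) k]
        congr 1
        rw [hS2]
        exact Finset.sum_congr rfl fun a _ => by rw [hMdiag a]; ring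
      have hoff : ∀ l ∈ Finset.univ.erase k,
          (∑ σ : Fin P → Fin m, δ (σ k) * M (σ k) (σ l) * δ (σ l))
            = ((m:ℝ)^P / m^2) * Qd :=
        fun l hl => hcount2 (fun a b => δ a * M a b * δ b) k l (Finset.ne_of_mem_erase hl)
      rw [Finset.sum_congr rfl hoff, hdiag, Finset.sum_const]
      have hcard : ((Finset.univ.erase k).card : ℝ) = (P:ℝ) - 1 := by
        rw [Finset.card_erase_of_mem (Finset.mem_univ k), Finset.card_univ, Fintype.card_fin]
        have hP : 1 ≤ P := k.pos
        push_cast [Nat.cast_sub hP]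
        ring
      rw [nsmul_eq_mul, hcard]
      ring
    rw [Finset.sum_congr rfl fun k _ => hk k, Finset.sum_const, Finset.card_univ,
      Fintype.card_fin, nsmul_eq_mul]
    ring
  -- main chain
  have hstep : ∑ σ : Fin P → Fin m, (F (x + Δ σ) - F x)
      ≤ (P:ℝ) * ((m:ℝ)^P / m) * S1
        + β / 2 * ((P:ℝ) * ((m:ℝ)^P / m) * S2 + (P:ℝ) * ((P:ℝ) - 1) * ((m:ℝ)^P / m^2) * Qd) := by
    calc ∑ σ : Fin P → Fin m, (F (x + Δ σ) - F x)
        ≤ ∑ σ : Fin P → Fin m, ((∑ k : Fin P, δ (σ k) * g (σ k))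
            + β / 2 * ∑ k : Fin P, ∑ l : Fin P, δ (σ k) * M (σ k) (σ l) * δ (σ l)) := by
          apply Finset.sum_le_sum
          intro σ _
          have := hσ σ
          rw [hL σ, hQ σ] at this
          exact this
      _ = (∑ σ : Fin P → Fin m, ∑ k : Fin P, δ (σ k) * g (σ k))
            + β / 2 * ∑ σ : Fin P → Fin m, ∑ k : Fin P, ∑ l : Fin P,
                δ (σ k) * M (σ k) (σ l) * δ (σ l) := by
          rw [Finset.sum_add_distrib, Finset.mul_sum]
      _ = _ := by rw [hsumL, hsumQ]
  have hP1 : (0:ℝ) ≤ (P:ℝ) * ((P:ℝ) - 1) := by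
    rcases Nat.eq_zero_or_pos P with h0 | h1
    · subst h0; norm_num
    · have h2 : (1:ℝ) ≤ (P:ℝ) := by exact_mod_cast h1
      nlinarith
  have hc : (0:ℝ) ≤ β / 2 * ((P:ℝ) * ((P:ℝ) - 1)) / (m:ℝ)^2 :=
    div_nonneg (mul_nonneg (by linarith : (0:ℝ) ≤ β/2) hP1) (sq_nonneg _)
  have hsplit : ∑ j, (δ j * g j + β / 2 * (δ j)^2) = S1 + β / 2 * S2 := by
    rw [Finset.sum_add_distrib, ← Finset.mul_sum, hS1, hS2]
  calc (1 / (m : ℝ) ^ P) * ∑ σ : Fin P → Fin m, (F (x + Δ σ) - F x)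
      ≤ (1 / (m : ℝ) ^ P) * ((P:ℝ) * ((m:ℝ)^P / m) * S1
          + β / 2 * ((P:ℝ) * ((m:ℝ)^P / m) * S2
            + (P:ℝ) * ((P:ℝ) - 1) * ((m:ℝ)^P / m^2) * Qd)) := by
        apply mul_le_mul_of_nonneg_left hstep (by positivity)
    _ = (P:ℝ)/m * S1 + β/2 * ((P:ℝ)/m * S2)
          + β/2 * ((P:ℝ) * ((P:ℝ)-1)) / (m:ℝ)^2 * Qd := by
        field_simp
        ring
    _ ≤ (P:ℝ)/m * S1 + β/2 * ((P:ℝ)/m * S2)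
          + β/2 * ((P:ℝ) * ((P:ℝ)-1)) / (m:ℝ)^2 * (ρ * S2) := by
        have := mul_le_mul_of_nonneg_left hQdρ hc
        linarith
    _ = (P : ℝ) * ((1 / (m : ℝ)) * ∑ j, (δ j * g j + β / 2 * (δ j) ^ 2)) +
        β / 2 * (P : ℝ) * ((P : ℝ) - 1) * (ρ / m) *
          ((1 / (m : ℝ)) * ∑ j, (δ j) ^ 2) := by
        rw [hsplit, ← hS2]
        field_simp
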